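/- Let n ≥ 4, k even with 4 ≤ k ≤ n, and a a real number with 1 + b(n,k) < a < n/2, where b(n,k) = (n−k)/(k−1) + (1/(k−1))√((n−1)(n−k)/k). Then for every t with −1/(a−1) < t < 1/(a+1), the quantity σ_k(t) = binom(n−2,k)t^k + 2binom(n−2,k−1)t^{k−1} + binom(n−2,k−2)t^{k−2} is nonnegative, while σ₁(t) = (n−2)t + 2 takes both positive and negative values as t ranges over (−1/(a−1), 1/(a+1)). -/

import Mathlib

lemma quad_nonneg (n k : ℕ) (hk : 4 ≤ k) (hkn : k ≤ n) (s : ℝ)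
    (hs : ((n:ℝ)-k)/((k:ℝ)-1) + 1/((k:ℝ)-1) * Real.sqrt (((n:ℝ)-1)*((n:ℝ)-k)/k) ≤ s) :
    0 ≤ (Nat.choose (n-2) (k-2) : ℝ) * s^2 - 2*(Nat.choose (n-2) (k-1) : ℝ)*s
        + (Nat.choose (n-2) k : ℝ) := by
  obtain ⟨j, rfl⟩ : ∃ j, k = j + 4 := ⟨k - 4, by omega⟩
  obtain ⟨d, rfl⟩ : ∃ d, n = j + 4 + d := ⟨n - (j+4), by omega⟩
  simp only [show j+4+d-2 = j+d+2 from by omega, show j+4-2 = j+2 from by omega,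
    show j+4-1 = j+3 from by omega] at *
  have hc0 : (0:ℝ) < (Nat.choose (j+d+2) (j+2) : ℝ) := by
    exact_mod_cast Nat.choose_pos (by omega)
  have hA : (Nat.choose (j+d+2) (j+3) : ℝ) * ((j:ℝ)+3)
      = (Nat.choose (j+d+2) (j+2) : ℝ) * d := by
    have h := Nat.choose_succ_right_eq (j+d+2) (j+2)
    rw [show j+2+1 = j+3 from by omega, show j+d+2 - (j+2) = d from by omega] at h
    exact_mod_cast h
  have hB : (Nat.choose (j+d+2) (j+4) : ℝ) * ((j:ℝ)+4)
      = (Nat.choose (j+d+2) (j+3) : ℝ) * ((d:ℝ) - 1) := by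
    cases d with
    | zero =>
      have h1 : Nat.choose (j+0+2) (j+4) = 0 := Nat.choose_eq_zero_of_lt (by omega)
      have h2 : Nat.choose (j+0+2) (j+3) = 0 := Nat.choose_eq_zero_of_lt (by omega)
      rw [h1, h2]; norm_num
    | succ e =>
      have h := Nat.choose_succ_right_eq (j+(e+1)+2) (j+3)
      rw [show j+3+1 = j+4 from by omega, show j+(e+1)+2 - (j+3) = e from by omega] at h
      have h' : (Nat.choose (j+(e+1)+2) (j+4) : ℝ) * ((j:ℝ)+4)
          = (Nat.choose (j+(e+1)+2) (j+3) : ℝ) * e := by exact_mod_cast h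
      push_cast
      push_cast at h'
      linarith
  set c0 : ℝ := (Nat.choose (j+d+2) (j+2) : ℝ)
  set c1 : ℝ := (Nat.choose (j+d+2) (j+3) : ℝ)
  set c2 : ℝ := (Nat.choose (j+d+2) (j+4) : ℝ)
  have hj0 : (0:ℝ) ≤ (j:ℝ) := Nat.cast_nonneg j
  have hd0 : (0:ℝ) ≤ (d:ℝ) := Nat.cast_nonneg d
  push_cast at hs
  have hE : 0 ≤ ((j:ℝ) + 4 + (d:ℝ) - 1) * ((j:ℝ) + 4 + (d:ℝ) - ((j:ℝ) + 4)) / ((j:ℝ) + 4) :=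
    div_nonneg (mul_nonneg (by linarith) (by linarith)) (by linarith)
  have hsq := Real.sq_sqrt hE
  have hR0 := Real.sqrt_nonneg
    (((j:ℝ) + 4 + (d:ℝ) - 1) * ((j:ℝ) + 4 + (d:ℝ) - ((j:ℝ) + 4)) / ((j:ℝ) + 4))
  set R : ℝ := Real.sqrt
    (((j:ℝ) + 4 + (d:ℝ) - 1) * ((j:ℝ) + 4 + (d:ℝ) - ((j:ℝ) + 4)) / ((j:ℝ) + 4)) with hRdef
  -- now hs : d/(j+3) + (1/(j+3)) R ≤ s (in the form with j+4-1)
  have hne : ((j:ℝ) + 4 - 1) ≠ 0 := by intro h; nlinarith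
  have hbs : (d:ℝ) + R ≤ ((j:ℝ)+3) * s := by
    have h1 := mul_le_mul_of_nonneg_left hs (by linarith : (0:ℝ) ≤ (j:ℝ)+3)
    have h2 : ((j:ℝ)+3) * (((j:ℝ) + 4 + (d:ℝ) - ((j:ℝ) + 4))/(((j:ℝ)+4) - 1)
        + 1/(((j:ℝ)+4) - 1) * R) = (d:ℝ) + R := by
      field_simp
      ring
    linarith [h2 ▸ h1]
  have hX0 : 0 ≤ ((j:ℝ)+3) * s - d := by linarith
  have hX2 : ((j:ℝ)+4+(d:ℝ)-1) * d ≤ ((j:ℝ)+4) * (((j:ℝ)+3) * s - d)^2 := by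
    have h1 : R ≤ ((j:ℝ)+3) * s - d := by linarith
    have h2 : R^2 ≤ (((j:ℝ)+3) * s - d)^2 := by nlinarith
    have h3 : ((j:ℝ)+4) * R^2 = ((j:ℝ)+4+(d:ℝ)-1) * d := by
      rw [hsq]; field_simp; ring
    have h4 := mul_le_mul_of_nonneg_left h2 (by linarith : (0:ℝ) ≤ (j:ℝ)+4)
    linarith
  have heq : ((j:ℝ)+4) * ((j:ℝ)+3)^2 * (c0 * s^2 - 2*c1*s + c2)
      = c0 * (((j:ℝ)+4) * (((j:ℝ)+3)*s - d)^2 - ((j:ℝ)+4+(d:ℝ)-1) * d) := by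
    linear_combination ((-2)*((j:ℝ)+4)*((j:ℝ)+3)*s + ((j:ℝ)+3)*((d:ℝ)-1)) * hA
      + ((j:ℝ)+3)^2 * hB
  have hfin : 0 ≤ ((j:ℝ)+4) * ((j:ℝ)+3)^2 * (c0 * s^2 - 2*c1*s + c2) := by
    rw [heq]
    nlinarith [mul_le_mul_of_nonneg_left hX2 hc0.le]
  have hpos : (0:ℝ) < ((j:ℝ)+4) * ((j:ℝ)+3)^2 := by positivity
  exact le_of_mul_le_mul_left (by simpa using hfin) hpos

set_option maxHeartbeats 1000000 in
/-- Example 4.2: for even `k` with `n ≥ k ≥ 4` and `1 + b(n,k) < a < n/2`,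
where `b(n,k) = (n−k)/(k−1) + (1/(k−1))√((n−1)(n−k)/k)`:
for every `t ∈ (−1/(a−1), 1/(a+1))` one has
`σ_k(t) = C(n−2,k)t^k + 2C(n−2,k−1)t^{k−1} + C(n−2,k−2)t^{k−2} ≥ 0`,
while `σ₁(t) = (n−2)t + 2` takes both positive and negative values on the interval. -/
theorem stmt12 (n k : ℕ) (hk : 4 ≤ k) (hkn : k ≤ n) (heven : Even k) (a : ℝ)
    (ha1 : 1 + (((n : ℝ) - k) / ((k : ℝ) - 1)
        + 1 / ((k : ℝ) - 1) * Real.sqrt (((n : ℝ) - 1) * ((n : ℝ) - k) / k)) < a)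
    (ha2 : a < (n : ℝ) / 2) :
    (∀ t : ℝ, -1 / (a - 1) < t → t < 1 / (a + 1) →
        0 ≤ (Nat.choose (n - 2) k : ℝ) * t ^ k
            + 2 * (Nat.choose (n - 2) (k - 1) : ℝ) * t ^ (k - 1)
            + (Nat.choose (n - 2) (k - 2) : ℝ) * t ^ (k - 2)) ∧
    (∃ t : ℝ, -1 / (a - 1) < t ∧ t < 1 / (a + 1) ∧ 0 < ((n : ℝ) - 2) * t + 2) ∧
    (∃ t : ℝ, -1 / (a - 1) < t ∧ t < 1 / (a + 1) ∧ ((n : ℝ) - 2) * t + 2 < 0) := by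
  have hk4 : (4:ℝ) ≤ (k:ℝ) := by exact_mod_cast hk
  have hkn' : (k:ℝ) ≤ (n:ℝ) := by exact_mod_cast hkn
  have hk1 : (0:ℝ) < (k:ℝ) - 1 := by linarith
  have hsq : 0 ≤ Real.sqrt (((n : ℝ) - 1) * ((n : ℝ) - k) / k) := Real.sqrt_nonneg _
  have hb : 0 ≤ ((n : ℝ) - k) / ((k : ℝ) - 1)
      + 1 / ((k : ℝ) - 1) * Real.sqrt (((n : ℝ) - 1) * ((n : ℝ) - k) / k) :=
    add_nonneg (div_nonneg (by linarith) hk1.le)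
      (mul_nonneg (div_nonneg zero_le_one hk1.le) hsq)
  have ha : (1:ℝ) < a := by linarith
  have ha' : (0:ℝ) < a - 1 := by linarith
  have ha'' : (0:ℝ) < a + 1 := by linarith
  have hN : (2:ℝ) ≤ (n:ℝ) - 2 := by linarith
  refine ⟨?_, ⟨0, ?_, ?_, by norm_num⟩, ?_⟩
  · -- main nonnegativity
    intro t ht1 ht2
    rcases le_or_gt 0 t with h0 | h0
    · have p1 : (0:ℝ) ≤ t ^ k := pow_nonneg h0 _
      have p2 : (0:ℝ) ≤ t ^ (k-1) := pow_nonneg h0 _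
      have p3 : (0:ℝ) ≤ t ^ (k-2) := pow_nonneg h0 _
      have q1 : (0:ℝ) ≤ (Nat.choose (n-2) k : ℝ) := Nat.cast_nonneg _
      have q2 : (0:ℝ) ≤ (Nat.choose (n-2) (k-1) : ℝ) := Nat.cast_nonneg _
      have q3 : (0:ℝ) ≤ (Nat.choose (n-2) (k-2) : ℝ) := Nat.cast_nonneg _
      have := mul_nonneg q1 p1
      have := mul_nonneg q2 p2
      have := mul_nonneg q3 p3
      nlinarith
    · set s : ℝ := (-t)⁻¹ with hsdef
      have hnt : (0:ℝ) < -t := by linarith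
      have hspos : (0:ℝ) < s := inv_pos.mpr hnt
      have hts : t * s = -1 := by
        rw [hsdef]; field_simp; rw [div_self h0.ne]
      have hlt : -t < 1/(a-1) := by
        have : -1/(a-1) = -(1/(a-1)) := by ring
        linarith [this ▸ ht1]
      have hone : (a-1) * (1/(a-1)) = 1 := by field_simp
      have hs1 : a - 1 < s := by
        nlinarith [mul_lt_mul_of_pos_left hlt ha', hts]
      have hsb : ((n : ℝ) - k) / ((k : ℝ) - 1)
          + 1 / ((k : ℝ) - 1) * Real.sqrt (((n : ℝ) - 1) * ((n : ℝ) - k) / k) ≤ s := by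
        linarith
      have hQ := quad_nonneg n k hk hkn s hsb
      have heven2 : Even (k-2) := (Nat.even_sub (by omega : 2 ≤ k)).mpr (by simp [heven])
      have htk : 0 ≤ t ^ (k-2) := heven2.pow_nonneg t
      have e1 : t^k = t^(k-2) * t^2 := by
        rw [← pow_add]; congr 1; omega
      have e2 : t^(k-1) = t^(k-2) * t := by
        rw [← pow_succ]; congr 1; omega
      have h2 : (0:ℝ) ≤ (Nat.choose (n-2) k : ℝ) * t^2
          + 2 * (Nat.choose (n-2) (k-1) : ℝ) * t + (Nat.choose (n-2) (k-2) : ℝ) := by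
        have h3 : t^2 * ((Nat.choose (n-2) (k-2) : ℝ) * s^2
            - 2*(Nat.choose (n-2) (k-1) : ℝ)*s + (Nat.choose (n-2) k : ℝ))
            = (Nat.choose (n-2) k : ℝ) * t^2
            + 2 * (Nat.choose (n-2) (k-1) : ℝ) * t + (Nat.choose (n-2) (k-2) : ℝ) := by
          linear_combination ((Nat.choose (n-2) (k-2) : ℝ)*(t*s-1)
            - 2*(Nat.choose (n-2) (k-1) : ℝ)*t) * hts
        rw [← h3]
        exact mul_nonneg (sq_nonneg t) hQ
      rw [e1, e2]
      nlinarith [mul_nonneg htk h2]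
  · -- -1/(a-1) < 0
    have := one_div_pos.mpr ha'
    linarith [(by ring : -1/(a-1) = -(1/(a-1)))]
  · exact one_div_pos.mpr ha''
  · -- negative value of σ₁
    refine ⟨-(1/(a-1) + 2/((n:ℝ)-2))/2, ?_, ?_, ?_⟩
    · have hp := one_div_pos.mpr ha'
      have hq : 2/((n:ℝ)-2) < 1/(a-1) := by
        rw [div_lt_div_iff₀ (by linarith) ha']
        linarith
      have : -1/(a-1) = -(1/(a-1)) := by ring
      linarith
    · have hp := one_div_pos.mpr ha'
      have hq : (0:ℝ) < 2/((n:ℝ)-2) := by positivity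
      have := one_div_pos.mpr ha''
      linarith
    · have hp := one_div_pos.mpr ha'
      have hNq : ((n:ℝ)-2) * (2/((n:ℝ)-2)) = 2 := by field_simp
      have hq : 2/((n:ℝ)-2) < 1/(a-1) := by
        rw [div_lt_div_iff₀ (by linarith) ha']
        linarith
      have hNp : 2 < ((n:ℝ)-2) * (1/(a-1)) := by
        calc (2:ℝ) = ((n:ℝ)-2) * (2/((n:ℝ)-2)) := hNq.symm
          _ < _ := by
            apply mul_lt_mul_of_pos_left hq (by linarith)
      linarith [hNp, hNq]
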